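/- For the 3×4 rectangle with generators σ_L = ((1,1),(1,3),(3,3),(3,1))((1,2),(2,3),(3,2),(2,1)) and σ_R = ((1,2),(1,4),(3,4),(3,2))((1,3),(2,4),(3,3),(2,2)), the group G = ⟨σ_L, σ_R⟩ has order 720 and is isomorphic to S₆; moreover the restriction of G to the orbit E = {(i,j) : i+j even} (which has 6 elements) is all of S₆. -/

import Mathlib

set_option maxRecDepth 8000

/-- σ_L for the 3×4 rectangle: clockwise rotation of the left 3×3 block, the product of
the 4-cycles ((1,1),(1,3),(3,3),(3,1)) and ((1,2),(2,3),(3,2),(2,1)) (written here with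
0-based indices). -/
def sigmaL34 : Equiv.Perm (Fin 3 × Fin 4) :=
  ([((0 : Fin 3), (0 : Fin 4)), (0, 2), (2, 2), (2, 0)]).formPerm *
  ([((0 : Fin 3), (1 : Fin 4)), (1, 2), (2, 1), (1, 0)]).formPerm

/-- σ_R for the 3×4 rectangle: clockwise rotation of the right 3×3 block, the product of
the 4-cycles ((1,2),(1,4),(3,4),(3,2)) and ((1,3),(2,4),(3,3),(2,2)) (0-based indices). -/
def sigmaR34 : Equiv.Perm (Fin 3 × Fin 4) :=
  ([((0 : Fin 3), (1 : Fin 4)), (0, 3), (2, 3), (2, 1)]).formPerm *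
  ([((0 : Fin 3), (2 : Fin 4)), (1, 3), (2, 2), (1, 1)]).formPerm

/-- The orbit E = {(i,j) : i+j even} of the 3×4 puzzle group (0-based indices have the
same parity of i+j as the paper's 1-based indices). -/
def orbitE : Set (Fin 3 × Fin 4) := {p | Even (p.1.1 + p.2.1)}

instance : DecidablePred (· ∈ orbitE) := fun p =>
  inferInstanceAs (Decidable (Even (p.1.1 + p.2.1)))

namespace Puzzle34

abbrev X := Fin 3 × Fin 4

/-- To each odd cell we attach a one-factorization ("synthematic total") of the six even
cells; this assignment is equivariant under the generators. -/
def T : X → Multiset (Multiset (Multiset X)) := fun x =>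
  if x = (0,1) then {{{(0,0), (0,2)}, {(1,1), (1,3)}, {(2,0), (2,2)}}, {{(0,0), (1,1)}, {(0,2), (2,0)}, {(1,3), (2,2)}}, {{(0,0), (1,3)}, {(0,2), (2,2)}, {(1,1), (2,0)}}, {{(0,0), (2,0)}, {(0,2), (1,3)}, {(1,1), (2,2)}}, {{(0,0), (2,2)}, {(0,2), (1,1)}, {(1,3), (2,0)}}} else
  if x = (0,3) then {{{(0,0), (0,2)}, {(1,1), (2,2)}, {(1,3), (2,0)}}, {{(0,0), (1,1)}, {(0,2), (1,3)}, {(2,0), (2,2)}}, {{(0,0), (1,3)}, {(0,2), (2,2)}, {(1,1), (2,0)}}, {{(0,0), (2,0)}, {(0,2), (1,1)}, {(1,3), (2,2)}}, {{(0,0), (2,2)}, {(0,2), (2,0)}, {(1,1), (1,3)}}} else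
  if x = (1,0) then {{{(0,0), (0,2)}, {(1,1), (2,2)}, {(1,3), (2,0)}}, {{(0,0), (1,1)}, {(0,2), (2,0)}, {(1,3), (2,2)}}, {{(0,0), (1,3)}, {(0,2), (1,1)}, {(2,0), (2,2)}}, {{(0,0), (2,0)}, {(0,2), (2,2)}, {(1,1), (1,3)}}, {{(0,0), (2,2)}, {(0,2), (1,3)}, {(1,1), (2,0)}}} else
  if x = (1,2) then {{{(0,0), (0,2)}, {(1,1), (2,0)}, {(1,3), (2,2)}}, {{(0,0), (1,1)}, {(0,2), (1,3)}, {(2,0), (2,2)}}, {{(0,0), (1,3)}, {(0,2), (2,0)}, {(1,1), (2,2)}}, {{(0,0), (2,0)}, {(0,2), (2,2)}, {(1,1), (1,3)}}, {{(0,0), (2,2)}, {(0,2), (1,1)}, {(1,3), (2,0)}}} else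
  if x = (2,1) then {{{(0,0), (0,2)}, {(1,1), (1,3)}, {(2,0), (2,2)}}, {{(0,0), (1,1)}, {(0,2), (2,2)}, {(1,3), (2,0)}}, {{(0,0), (1,3)}, {(0,2), (2,0)}, {(1,1), (2,2)}}, {{(0,0), (2,0)}, {(0,2), (1,1)}, {(1,3), (2,2)}}, {{(0,0), (2,2)}, {(0,2), (1,3)}, {(1,1), (2,0)}}} else
  if x = (2,3) then {{{(0,0), (0,2)}, {(1,1), (2,0)}, {(1,3), (2,2)}}, {{(0,0), (1,1)}, {(0,2), (2,2)}, {(1,3), (2,0)}}, {{(0,0), (1,3)}, {(0,2), (1,1)}, {(2,0), (2,2)}}, {{(0,0), (2,0)}, {(0,2), (1,3)}, {(1,1), (2,2)}}, {{(0,0), (2,2)}, {(0,2), (2,0)}, {(1,1), (1,3)}}} else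
  0

/-- The action of a function on a total. -/
def act (g : X → X) (t : Multiset (Multiset (Multiset X))) : Multiset (Multiset (Multiset X)) :=
  t.map (fun m => m.map (fun e => e.map g))

lemma act_comp (g h : X → X) (t : Multiset (Multiset (Multiset X))) :
    act g (act h t) = act (g ∘ h) t := by
  simp [act, Multiset.map_map, Function.comp_def]

/-- The subgroup of permutations compatible with the totals structure. -/
def P : Subgroup (Equiv.Perm X) where
  carrier := {g | ∀ x, T (g x) = act g (T x)}
  one_mem' := by
    intro x
    simp [act]
  mul_mem' := by
    intro g h hg hh x
    have := hg (h x)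
    simp only [Equiv.Perm.mul_apply]
    rw [this, hh x, act_comp]
    rfl
  inv_mem' := by
    intro g hg x
    have h1 := hg (g⁻¹ x)
    rw [show g (g⁻¹ x) = x from g.apply_symm_apply x] at h1
    rw [h1, act_comp]
    have : (⇑g⁻¹ ∘ ⇑g) = id := by
      funext y; simp
    rw [this]
    simp [act]

lemma mem_orbitE_iff_T (x : X) : x ∈ orbitE ↔ T x = 0 := by
  revert x; decide

lemma parity_of_mem_P {g : Equiv.Perm X} (hg : g ∈ P) :
    ∀ x, x ∈ orbitE ↔ g x ∈ orbitE := by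
  intro x
  rw [mem_orbitE_iff_T, mem_orbitE_iff_T, hg x]
  constructor
  · intro h; rw [h]; rfl
  · intro h
    simpa [act, Multiset.map_eq_zero] using h

/-- Restriction of a compatible permutation to the orbit E. -/
def ρ : P →* Equiv.Perm orbitE where
  toFun g := Equiv.Perm.subtypePerm (g : Equiv.Perm X) (fun x => (parity_of_mem_P g.2 x).symm)
  map_one' := rfl
  map_mul' := fun g h => rfl

lemma sigmaL_mem_P : sigmaL34 ∈ P := by
  intro x; revert x; decide

lemma sigmaR_mem_P : sigmaR34 ∈ P := by
  intro x; revert x; decide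

lemma T_inj_odd : ∀ y x : X, y ∉ orbitE → T y = T x → y = x := by decide

lemma T_sub_E : ∀ x : X, ∀ m ∈ T x, ∀ e ∈ m, ∀ p ∈ e, p ∈ orbitE := by decide

lemma act_fix {g : Equiv.Perm X} (hfix : ∀ p ∈ orbitE, g p = p) (x : X) :
    act (⇑g) (T x) = T x := by
  have h2 : ∀ m ∈ T x, m.map (fun e => Multiset.map (⇑g) e) = m := by
    intro m hm
    have h3 : ∀ e ∈ m, Multiset.map (⇑g) e = e := by
      intro e he
      calc Multiset.map (⇑g) e = Multiset.map id e :=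
            Multiset.map_congr rfl (fun p hp => hfix p (T_sub_E x m hm e he p hp))
        _ = e := Multiset.map_id e
    calc m.map (fun e => Multiset.map (⇑g) e) = m.map id :=
          Multiset.map_congr rfl (fun e he => h3 e he)
      _ = m := Multiset.map_id m
  calc act (⇑g) (T x) = (T x).map id := Multiset.map_congr rfl (fun m hm => h2 m hm)
    _ = T x := Multiset.map_id _

lemma ρ_injective : Function.Injective ρ := by
  rw [injective_iff_map_eq_one]
  rintro ⟨g, hg⟩ h1
  have hE : ∀ x (hx : x ∈ orbitE), g x = x := by
    intro x hx
    have := congrArg (fun (π : Equiv.Perm orbitE) => (π ⟨x, hx⟩ : X)) h1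
    exact this
  ext x : 2
  · by_cases hx : x ∈ orbitE
    · exact hE x hx
    · have hgx : g x ∉ orbitE := fun h => hx (((parity_of_mem_P hg) x).mpr h)
      refine T_inj_odd (g x) x hgx ?_
      rw [hg x, act_fix (fun p hp => hE p hp) x]

abbrev G : Subgroup (Equiv.Perm X) := Subgroup.closure {sigmaL34, sigmaR34}

lemma G_le_P : G ≤ P := by
  rw [Subgroup.closure_le]
  rintro g (rfl | rfl)
  · exact sigmaL_mem_P
  · exact sigmaR_mem_P

def ψ : G →* Equiv.Perm orbitE := ρ.comp (Subgroup.inclusion G_le_P)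

def aG : G := ⟨sigmaL34, Subgroup.subset_closure (by simp)⟩
def bG : G := ⟨sigmaR34, Subgroup.subset_closure (by simp)⟩

def aE : Equiv.Perm orbitE := ψ aG
def bE : Equiv.Perm orbitE := ψ bG

def e0 : orbitE := ⟨(0,0), by decide⟩
def e1 : orbitE := ⟨(0,2), by decide⟩
def e2 : orbitE := ⟨(1,1), by decide⟩
def e3 : orbitE := ⟨(1,3), by decide⟩
def e4 : orbitE := ⟨(2,0), by decide⟩
def e5 : orbitE := ⟨(2,2), by decide⟩

def cyc : Equiv.Perm orbitE := bE * aE * aE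

lemma cyc_eq : cyc = List.formPerm [e0, e2, e1, e4, e3, e5] := by
  apply Equiv.ext
  intro x
  have : ∀ y : orbitE, cyc y = List.formPerm [e0, e2, e1, e4, e3, e5] y := by
    decide
  exact this x

lemma swap_eq : Equiv.swap e0 e2 = bE * aE * bE * bE * aE * aE * bE := by
  apply Equiv.ext
  intro x
  have : ∀ y : orbitE, Equiv.swap e0 e2 y = (bE * aE * bE * bE * aE * aE * bE) y := by
    decide
  exact this x

lemma closure_aE_bE : Subgroup.closure {aE, bE} = ⊤ := by
  have hnd : List.Nodup [e0, e2, e1, e4, e3, e5] := by decide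
  have hc : cyc.IsCycle := by
    rw [cyc_eq]
    exact List.isCycle_formPerm hnd (by decide)
  have hs : cyc.support = Finset.univ := by
    rw [cyc_eq, List.support_formPerm_of_nodup _ hnd (by decide)]
    decide
  have hkey := Equiv.Perm.closure_cycle_adjacent_swap hc hs e0
  have hce0 : cyc e0 = e2 := by decide
  rw [hce0] at hkey
  rw [eq_top_iff, ← hkey, Subgroup.closure_le]
  rintro g (rfl | rfl)
  · show cyc ∈ _
    exact mul_mem (mul_mem (Subgroup.subset_closure (by simp))
      (Subgroup.subset_closure (by simp))) (Subgroup.subset_closure (by simp))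
  · show Equiv.swap e0 e2 ∈ _
    rw [swap_eq]
    have ha : aE ∈ Subgroup.closure {aE, bE} := Subgroup.subset_closure (by simp)
    have hb : bE ∈ Subgroup.closure {aE, bE} := Subgroup.subset_closure (by simp)
    exact mul_mem (mul_mem (mul_mem (mul_mem (mul_mem (mul_mem hb ha) hb) hb) ha) ha) hb

lemma ψ_surjective : Function.Surjective ψ := by
  intro π
  have hmem : π ∈ ψ.range := by
    have : Subgroup.closure {aE, bE} ≤ ψ.range := by
      rw [Subgroup.closure_le]
      rintro g (rfl | rfl)
      · exact ⟨aG, rfl⟩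
      · exact ⟨bG, rfl⟩
    rw [closure_aE_bE] at this
    exact this (Subgroup.mem_top π)
  exact hmem

lemma ψ_injective : Function.Injective ψ :=
  ρ_injective.comp (Subgroup.inclusion_injective G_le_P)

noncomputable def GIso : G ≃* Equiv.Perm orbitE :=
  MulEquiv.ofBijective ψ ⟨ψ_injective, ψ_surjective⟩

lemma card_orbitE : Nat.card orbitE = 6 := by
  rw [Nat.card_eq_fintype_card]
  decide

/-- `permCongr` as a `MulEquiv`. -/
def permMulEquiv {α β : Type*} (e : α ≃ β) : Equiv.Perm α ≃* Equiv.Perm β :=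
  { Equiv.permCongr e with
    map_mul' := fun f g => by
      apply Equiv.ext
      intro x
      simp [Equiv.permCongr_def] }

noncomputable def orbitEquiv : orbitE ≃ Fin 6 :=
  Fintype.equivFinOfCardEq (by rw [← Nat.card_eq_fintype_card, card_orbitE])

end Puzzle34

/-- For the 3×4 rectangle, the puzzle group G = ⟨σ_L, σ_R⟩ has order 720 and is
isomorphic to S₆; moreover the orbit E = {(i,j) : i+j even} has 6 elements, is
preserved by G, and the restriction of G to E is all of S₆ (every permutation of E
is induced by some element of G). -/
theorem three_by_four_puzzle_group :
    Nat.card (Subgroup.closure {sigmaL34, sigmaR34}) = 720 ∧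
    Nonempty ((Subgroup.closure {sigmaL34, sigmaR34}) ≃* Equiv.Perm (Fin 6)) ∧
    Nat.card orbitE = 6 ∧
    (∀ g ∈ Subgroup.closure {sigmaL34, sigmaR34}, ∀ p ∈ orbitE, g p ∈ orbitE) ∧
    (∀ π : Equiv.Perm orbitE, ∃ g ∈ Subgroup.closure {sigmaL34, sigmaR34},
      ∀ p : orbitE, g (p : Fin 3 × Fin 4) = ((π p : orbitE) : Fin 3 × Fin 4)) := by
  refine ⟨?_, ?_, Puzzle34.card_orbitE, ?_, ?_⟩
  · rw [Nat.card_congr Puzzle34.GIso.toEquiv, Nat.card_eq_fintype_card, Fintype.card_perm]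
    have : Fintype.card Puzzle34.X = 12 := by decide
    have h6 : Fintype.card (orbitE : Set Puzzle34.X) = 6 := by
      rw [← Nat.card_eq_fintype_card]; exact Puzzle34.card_orbitE
    rw [h6]
    rfl
  · exact ⟨Puzzle34.GIso.trans (Puzzle34.permMulEquiv Puzzle34.orbitEquiv)⟩
  · intro g hg p hp
    exact (Puzzle34.parity_of_mem_P (Puzzle34.G_le_P hg) p).mp hp
  · intro π
    obtain ⟨⟨g, hg⟩, hgπ⟩ := Puzzle34.ψ_surjective π
    refine ⟨g, hg, fun p => ?_⟩
    have := congrArg (fun (σ : Equiv.Perm orbitE) => ((σ p : orbitE) : Puzzle34.X)) hgπ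
    exact this
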